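/- Fix an integer d with 0 ≤ d ≤ n−1 and an element a ∈ R. If there exist elements b_1, …, b_d ∈ R such that a ∘ G_0 = Σ_{k=1}^{d} b_k ∘ G_k, then a ∈ I_d. -/

import Mathlib

open MvPolynomial

noncomputable section

variable {k : Type*} [Field k]

open Classical in
/-- Contraction action of `g ∈ k[x_1,…]` on `F ∈ k[X_1,…]`: the monomial `x^a` sends
`X^b` to `X^(b-a)` if `a ≤ b` and to `0` otherwise, extended bilinearly. -/
def contract {σ : Type*} (g F : MvPolynomial σ k) : MvPolynomial σ k :=
  ∑ a ∈ g.support, ∑ b ∈ F.support,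
    if a ≤ b then monomial (b - a) (g.coeff a * F.coeff b) else 0

/-- The annihilator `Ann(F) = {g : g ∘ F = 0}` (a set; it is in fact an ideal). -/
def annSet {σ : Type*} (F : MvPolynomial σ k) : Set (MvPolynomial σ k) :=
  {g | contract g F = 0}

/-- The annihilator ideal of `F` (since `annSet F` is closed under the ideal operations,
the span coincides with it). -/
def annIdeal {σ : Type*} (F : MvPolynomial σ k) : Ideal (MvPolynomial σ k) :=
  Ideal.span (annSet F)

/-- `C` is a free module over `A` via the ring map `ι : A → C`. -/
def freeVia {A C : Type*} [CommRing A] [CommRing C] (ι : A →+* C) : Prop :=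
  @Module.Free A C _ _ (Module.compHom C ι)


section ContractAux

variable {σ : Type*}

lemma coeff_contract (g F : MvPolynomial σ k) (m : σ →₀ ℕ) :
    coeff m (contract g F) = ∑ a ∈ g.support, g.coeff a * F.coeff (a + m) := by
  classical
  unfold contract
  rw [coeff_sum]
  refine Finset.sum_congr rfl fun a _ => ?_
  rw [coeff_sum]
  have step : ∀ b ∈ F.support,
      coeff m (if a ≤ b then monomial (b - a) (g.coeff a * F.coeff b) else 0)
        = if b = a + m then g.coeff a * F.coeff b else 0 := by
    intro b _
    by_cases hab : a ≤ b
    · rw [if_pos hab, coeff_monomial]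
      congr 1
      simp only [eq_iff_iff]
      constructor
      · intro h; rw [← h, add_tsub_cancel_of_le hab]
      · intro h; rw [h, add_tsub_cancel_left]
    · rw [if_neg hab]
      rw [if_neg (by rintro rfl; exact hab le_self_add)]
      simp
  rw [Finset.sum_congr rfl step, Finset.sum_ite_eq' F.support (a + m)
    (fun b => g.coeff a * F.coeff b)]
  split_ifs with h
  · rfl
  · rw [notMem_support_iff.mp h, mul_zero]

lemma coeff_contract_subset (g F : MvPolynomial σ k) (m : σ →₀ ℕ)
    {S : Finset (σ →₀ ℕ)} (hS : g.support ⊆ S) :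
    coeff m (contract g F) = ∑ a ∈ S, g.coeff a * F.coeff (a + m) := by
  rw [coeff_contract]
  exact Finset.sum_subset hS fun a _ ha => by
    rw [notMem_support_iff.mp ha, zero_mul]

lemma contract_zero_left (F : MvPolynomial σ k) : contract (0 : MvPolynomial σ k) F = 0 := by
  ext m; simp [coeff_contract]

lemma contract_zero_right (g : MvPolynomial σ k) : contract g (0 : MvPolynomial σ k) = 0 := by
  ext m; simp [coeff_contract]

lemma contract_add_left (g g' F : MvPolynomial σ k) :
    contract (g + g') F = contract g F + contract g' F := by
  classical
  ext m
  rw [coeff_add,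
    coeff_contract_subset (g + g') F m
      ((support_add).trans (subset_refl (g.support ∪ g'.support))),
    coeff_contract_subset g F m (Finset.subset_union_left),
    coeff_contract_subset g' F m (Finset.subset_union_right),
    ← Finset.sum_add_distrib]
  exact Finset.sum_congr rfl fun a _ => by rw [coeff_add, add_mul]

lemma contract_add_right (g F F' : MvPolynomial σ k) :
    contract g (F + F') = contract g F + contract g F' := by
  ext m
  simp [coeff_contract, mul_add, Finset.sum_add_distrib]

lemma coeff_contract_monomial (s : σ →₀ ℕ) (c : k) (F : MvPolynomial σ k) (m : σ →₀ ℕ) :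
    coeff m (contract (monomial s c) F) = c * F.coeff (s + m) := by
  classical
  rw [coeff_contract_subset (monomial s c) F m (support_monomial_subset (s := s) (a := c))]
  simp [coeff_monomial]

lemma contract_mul (g h F : MvPolynomial σ k) :
    contract (g * h) F = contract g (contract h F) := by
  induction g using MvPolynomial.induction_on' with
  | add p q hp hq => rw [add_mul, contract_add_left, hp, hq, contract_add_left]
  | monomial u c =>
    induction h using MvPolynomial.induction_on' with
    | add p q hp hq =>
      rw [mul_add, contract_add_left, hp, hq, contract_add_left, contract_add_right]
    | monomial v e =>
      rw [monomial_mul]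
      ext m
      rw [coeff_contract_monomial, coeff_contract_monomial, coeff_contract_monomial,
        ← mul_assoc]
      congr 1
      rw [add_comm u v, add_assoc]

lemma contract_sum_right {ι : Type*} (g : MvPolynomial σ k) (s : Finset ι)
    (F : ι → MvPolynomial σ k) :
    contract g (∑ j ∈ s, F j) = ∑ j ∈ s, contract g (F j) := by
  classical
  induction s using Finset.cons_induction with
  | empty => simp [contract_zero_right]
  | cons j s hj ih => rw [Finset.sum_cons, Finset.sum_cons, contract_add_right, ih]

lemma contract_eq_zero_of_mem_annIdeal (F g : MvPolynomial σ k)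
    (hg : g ∈ annIdeal F) : contract g F = 0 := by
  refine Submodule.span_induction ?_ ?_ ?_ ?_ hg
  · intro x hx; exact hx
  · exact contract_zero_left F
  · intro x y _ _ hx hy; rw [contract_add_left, hx, hy, add_zero]
  · intro c x _ hx
    rw [smul_eq_mul, contract_mul, hx, contract_zero_right]

end ContractAux

/-- Lemma 3.5.  Let `G_0 ∈ Q` be nonzero homogeneous, `G_i` homogeneous of degree
`deg G_0 + i`, and let `I_0 = Ann(G_0)`, `I_i = (I_{i-1} : Ann(G_i))`.  Fix `0 ≤ d ≤ n-1`
and `a ∈ R`.  If `a ∘ G_0 = Σ_{k=1}^{d} b_k ∘ G_k` for some `b_1, …, b_d ∈ R`,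
then `a ∈ I_d`. -/
theorem lemma_Id (r n : ℕ) (hn : 1 ≤ n) (jB : ℕ)
    (G : ℕ → MvPolynomial (Fin r) k) (hG0 : G 0 ≠ 0)
    (hGhom : ∀ i < n, (G i).IsHomogeneous (jB + i))
    (I : ℕ → Ideal (MvPolynomial (Fin r) k))
    (hI0 : I 0 = annIdeal (G 0))
    (hIsucc : ∀ i, I (i + 1) = (I i).colon (annIdeal (G (i + 1))))
    (d : ℕ) (hd : d ≤ n - 1) (a : MvPolynomial (Fin r) k)
    (b : ℕ → MvPolynomial (Fin r) k)
    (hab : contract a (G 0) = ∑ j ∈ Finset.Icc 1 d, contract (b j) (G j)) :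
    a ∈ I d := by
  have key : ∀ d (a : MvPolynomial (Fin r) k) (b : ℕ → MvPolynomial (Fin r) k),
      contract a (G 0) = ∑ j ∈ Finset.Icc 1 d, contract (b j) (G j) → a ∈ I d := by
    intro d
    induction d with
    | zero =>
      intro a b hab
      rw [hI0]
      refine Ideal.subset_span ?_
      simpa [annSet] using hab
    | succ d ih =>
      intro a b hab
      rw [hIsucc d, Submodule.mem_colon]
      intro p hp
      rw [smul_eq_mul, mul_comm]
      refine ih (p * a) (fun j => p * b j) ?_
      have hlast : contract p (contract (b (d + 1)) (G (d + 1))) = 0 := by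
        rw [← contract_mul, mul_comm, contract_mul,
          contract_eq_zero_of_mem_annIdeal _ _ hp, contract_zero_right]
      rw [contract_mul, hab, contract_sum_right,
        Finset.sum_Icc_succ_top (Nat.le_add_left 1 d), hlast, add_zero]
      exact Finset.sum_congr rfl fun j _ => (contract_mul p (b j) (G j)).symm
  exact key d a b hab

end
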